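/- Let μ > 0 and let σ̄ : ℝ → ℝ be C² with σ̄(τ) > |τ| and σ̄(τ) − τ·σ̄'(τ) > 0 for all τ ∈ ℝ. Suppose w₀ : {(ξ, ζ) ∈ ℝ² : ζ > |ξ|} → ℝ is twice differentiable and satisfies w₀(λ^{−1}τ, λ^{−1}σ̄(τ)) = λ^{−1−μ} for all λ > 0 and all τ ∈ ℝ. Then for all λ > 0 and τ ∈ ℝ, the Hessian of w₀ at (λ^{−1}τ, λ^{−1}σ̄(τ)) equals (1+μ)·λ^{1−μ}·(σ̄ − τσ̄')^{−3}·[ μ·(σ̄ − τσ̄')·(−σ̄', 1)⊗(−σ̄', 1) − σ̄''·(−σ̄, τ)⊗(−σ̄, τ) ], where σ̄, σ̄', σ̄'' are evaluated at τ and v⊗v denotes the rank-one matrix with entries v_i v_j. -/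

import Mathlib

open scoped Topology

/-- The standard basis of `ℝ × ℝ`. -/
def e2 : Fin 2 → ℝ × ℝ := ![(1, 0), (0, 1)]

set_option maxHeartbeats 2000000 in
/-- **Hessian formula for the homogeneous model function.** If `w₀` is homogeneous of
degree `1+μ` and equals `λ^(-1-μ)` on the dilated leaf `λ⁻¹·{(τ, σ̄(τ))}`, then at the
point `(λ⁻¹τ, λ⁻¹σ̄(τ))` its Hessian equals
`(1+μ)·λ^(1-μ)·(σ̄-τσ̄')⁻³·[μ(σ̄-τσ̄')(-σ̄',1)⊗(-σ̄',1) - σ̄''(-σ̄,τ)⊗(-σ̄,τ)]`. -/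
theorem model_hessian_formula (μ : ℝ) (hμ : 0 < μ)
    (σb : ℝ → ℝ) (hσb_C2 : ContDiff ℝ 2 σb)
    (hσb_gt : ∀ τ : ℝ, |τ| < σb τ)
    (hσb_trans : ∀ τ : ℝ, 0 < σb τ - τ * deriv σb τ)
    (w₀ : ℝ × ℝ → ℝ)
    (hw₀_diff : ∀ p : ℝ × ℝ, |p.1| < p.2 → DifferentiableAt ℝ w₀ p)
    (hw₀_diff2 : ∀ p : ℝ × ℝ, |p.1| < p.2 → DifferentiableAt ℝ (fderiv ℝ w₀) p)
    (hw₀_leaf : ∀ lam > (0 : ℝ), ∀ τ : ℝ,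
      w₀ (lam⁻¹ * τ, lam⁻¹ * σb τ) = lam ^ (-1 - μ)) :
    ∀ lam > (0 : ℝ), ∀ τ : ℝ, ∀ i j : Fin 2,
      fderiv ℝ (fun p => fderiv ℝ w₀ p (e2 i)) (lam⁻¹ * τ, lam⁻¹ * σb τ) (e2 j) =
        (1 + μ) * lam ^ (1 - μ) * (σb τ - τ * deriv σb τ)⁻¹ ^ 3 *
          (μ * (σb τ - τ * deriv σb τ) *
              (![-(deriv σb τ), 1] i * ![-(deriv σb τ), 1] j) -
            deriv (deriv σb) τ * (![-(σb τ), τ] i * ![-(σb τ), τ] j)) := by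
  have hσb_diff : Differentiable ℝ σb := hσb_C2.differentiable (by norm_num)
  have hσb'_diff : Differentiable ℝ (deriv σb) := by
    have h2 : ContDiff ℝ (1 + 1) σb := by exact_mod_cast hσb_C2
    exact ((contDiff_succ_iff_deriv.mp h2).2.2).differentiable (by norm_num)
  have hmem : ∀ l : ℝ, 0 < l → ∀ t : ℝ, |l⁻¹ * t| < l⁻¹ * σb t := by
    intro l hl t
    rw [abs_mul, abs_of_pos (inv_pos.2 hl)]
    exact mul_lt_mul_of_pos_left (hσb_gt t) (inv_pos.2 hl)
  -- first-order identities
  have gA : ∀ l : ℝ, 0 < l → ∀ t : ℝ,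
      fderiv ℝ w₀ (l⁻¹ * t, l⁻¹ * σb t) ((1 : ℝ), deriv σb t) = 0 := by
    intro l hl t
    have hcurve : HasDerivAt (fun s => ((l⁻¹ * s, l⁻¹ * σb s) : ℝ × ℝ))
        (l⁻¹ * 1, l⁻¹ * deriv σb t) t :=
      ((hasDerivAt_id t).const_mul l⁻¹).prodMk ((hσb_diff t).hasDerivAt.const_mul l⁻¹)
    have hcomp := ((hw₀_diff _ (hmem l hl t)).hasFDerivAt).comp_hasDerivAt t hcurve
    have h0 : fderiv ℝ w₀ (l⁻¹ * t, l⁻¹ * σb t) (l⁻¹ * 1, l⁻¹ * deriv σb t) = 0 :=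
      hcomp.unique ((hasDerivAt_const t (l ^ (-1 - μ))).congr_of_eventuallyEq
        (Filter.Eventually.of_forall fun s => hw₀_leaf l hl s))
    have hv : ((1 : ℝ), deriv σb t) = l • ((l⁻¹ * 1, l⁻¹ * deriv σb t) : ℝ × ℝ) := by
      simp only [Prod.smul_mk, smul_eq_mul, Prod.mk.injEq]
      constructor <;> field_simp
    rw [hv, map_smul, h0, smul_zero]
  have gB : ∀ l : ℝ, 0 < l → ∀ t : ℝ,
      fderiv ℝ w₀ (l⁻¹ * t, l⁻¹ * σb t) ((t : ℝ), σb t) = (1 + μ) * l ^ (-μ) := by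
    intro l hl t
    have hinv : HasDerivAt (fun x : ℝ => x⁻¹) (-(l ^ 2)⁻¹) l := hasDerivAt_inv hl.ne'
    have hcurve : HasDerivAt (fun s : ℝ => ((s⁻¹ * t, s⁻¹ * σb t) : ℝ × ℝ))
        (-(l ^ 2)⁻¹ * t, -(l ^ 2)⁻¹ * σb t) l :=
      (hinv.mul_const t).prodMk (hinv.mul_const (σb t))
    have hcomp := ((hw₀_diff _ (hmem l hl t)).hasFDerivAt).comp_hasDerivAt l hcurve
    have heq : (w₀ ∘ fun s : ℝ => ((s⁻¹ * t, s⁻¹ * σb t) : ℝ × ℝ)) =ᶠ[𝓝 l]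
        fun s => s ^ (-1 - μ) := by
      filter_upwards [eventually_gt_nhds hl] with s hs using hw₀_leaf s hs t
    have hrpow : HasDerivAt (fun s : ℝ => s ^ (-1 - μ)) ((-1 - μ) * l ^ (-1 - μ - 1)) l :=
      Real.hasDerivAt_rpow_const (Or.inl hl.ne')
    have h0 : fderiv ℝ w₀ (l⁻¹ * t, l⁻¹ * σb t) (-(l ^ 2)⁻¹ * t, -(l ^ 2)⁻¹ * σb t)
        = (-1 - μ) * l ^ (-1 - μ - 1) :=
      hcomp.unique (hrpow.congr_of_eventuallyEq heq)
    have h2 : (l : ℝ) ^ 2 ≠ 0 := pow_ne_zero 2 hl.ne'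
    have hv : ((t : ℝ), σb t) = (-(l ^ 2)) • ((-(l ^ 2)⁻¹ * t, -(l ^ 2)⁻¹ * σb t) : ℝ × ℝ) := by
      simp only [Prod.smul_mk, smul_eq_mul, Prod.mk.injEq]
      constructor <;> field_simp
    rw [hv, map_smul, h0, smul_eq_mul]
    have h2' : (l : ℝ) ^ 2 * l ^ (-1 - μ - 1) = l ^ (-μ) := by
      rw [← Real.rpow_natCast l 2, ← Real.rpow_add hl]
      congr 1
      push_cast; ring
    calc -(l ^ 2) * ((-1 - μ) * l ^ (-1 - μ - 1)) = (1 + μ) * (l ^ 2 * l ^ (-1 - μ - 1)) := by ring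
    _ = (1 + μ) * l ^ (-μ) := by rw [h2']
  -- now the second-order computation at a fixed point
  intro lam hlam τ i j
  have hD : σb τ - τ * deriv σb τ ≠ 0 := (hσb_trans τ).ne'
  have hp₀ := hmem lam hlam τ
  have hA : HasFDerivAt (fderiv ℝ w₀) (fderiv ℝ (fderiv ℝ w₀) (lam⁻¹ * τ, lam⁻¹ * σb τ))
      (lam⁻¹ * τ, lam⁻¹ * σb τ) := (hw₀_diff2 _ hp₀).hasFDerivAt
  set A := fderiv ℝ (fderiv ℝ w₀) (lam⁻¹ * τ, lam⁻¹ * σb τ) with hAdef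
  have hL : lam ^ ((1 : ℝ) - μ) = lam * lam ^ (-μ) := by
    rw [show (1 : ℝ) - μ = 1 + -μ by ring, Real.rpow_add hlam, Real.rpow_one]
  -- value of the gradient on (0,1)
  have g01 : fderiv ℝ w₀ (lam⁻¹ * τ, lam⁻¹ * σb τ) ((0 : ℝ), (1 : ℝ))
      = (σb τ - τ * deriv σb τ)⁻¹ * ((1 + μ) * lam ^ (-μ)) := by
    have hv : ((0 : ℝ), (1 : ℝ)) = (σb τ - τ * deriv σb τ)⁻¹ •
        (((τ, σb τ) : ℝ × ℝ) - τ • ((1, deriv σb τ) : ℝ × ℝ)) := by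
      simp only [Prod.smul_mk, smul_eq_mul, Prod.mk.injEq, Prod.smul_def, Prod.sub_def]
      constructor <;> field_simp <;> ring
    rw [hv, map_smul, map_sub, map_smul, gB lam hlam τ, gA lam hlam τ]
    simp
  -- second derivative in the λ-direction
  have hinv : HasDerivAt (fun x : ℝ => x⁻¹) (-(lam ^ 2)⁻¹) lam := hasDerivAt_inv hlam.ne'
  have hδ : HasDerivAt (fun s : ℝ => ((s⁻¹ * τ, s⁻¹ * σb τ) : ℝ × ℝ))
      (-(lam ^ 2)⁻¹ * τ, -(lam ^ 2)⁻¹ * σb τ) lam :=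
    (hinv.mul_const τ).prodMk (hinv.mul_const (σb τ))
  have hc : HasDerivAt (fun s : ℝ => fderiv ℝ w₀ (s⁻¹ * τ, s⁻¹ * σb τ))
      (A (-(lam ^ 2)⁻¹ * τ, -(lam ^ 2)⁻¹ * σb τ)) lam := hA.comp_hasDerivAt lam hδ
  have hvδ : ((-(lam ^ 2)⁻¹ * τ, -(lam ^ 2)⁻¹ * σb τ) : ℝ × ℝ)
      = (-(lam ^ 2)⁻¹) • ((τ, σb τ) : ℝ × ℝ) := by
    simp only [Prod.smul_mk, smul_eq_mul]
  have hlam2 : (-(lam ^ 2)⁻¹ : ℝ) ≠ 0 := by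
    simp [pow_ne_zero 2 hlam.ne']
  have Avu : A ((τ, σb τ) : ℝ × ℝ) ((1 : ℝ), deriv σb τ) = 0 := by
    have hψ := hc.clm_apply (hasDerivAt_const lam (((1 : ℝ), deriv σb τ) : ℝ × ℝ))
    have h0 := hψ.unique ((hasDerivAt_const lam (0 : ℝ)).congr_of_eventuallyEq
      (by filter_upwards [eventually_gt_nhds hlam] with s hs using gA s hs τ))
    rw [hvδ, map_smul] at h0
    simp only [map_zero, add_zero, ContinuousLinearMap.smul_apply, smul_eq_mul] at h0
    exact (mul_eq_zero.mp h0).resolve_left hlam2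
  have Avv : A ((τ, σb τ) : ℝ × ℝ) ((τ, σb τ) : ℝ × ℝ) = μ * (1 + μ) * (lam * lam ^ (-μ)) := by
    have hψ := hc.clm_apply (hasDerivAt_const lam (((τ : ℝ), σb τ) : ℝ × ℝ))
    have hrpow : HasDerivAt (fun s : ℝ => (1 + μ) * s ^ (-μ))
        ((1 + μ) * (-μ * lam ^ (-μ - 1))) lam :=
      (Real.hasDerivAt_rpow_const (Or.inl hlam.ne')).const_mul (1 + μ)
    have h0 := hψ.unique (hrpow.congr_of_eventuallyEq
      (by filter_upwards [eventually_gt_nhds hlam] with s hs using gB s hs τ))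
    rw [hvδ, map_smul] at h0
    simp only [map_zero, add_zero, ContinuousLinearMap.smul_apply, smul_eq_mul] at h0
    have h2 : (lam : ℝ) ^ 2 ≠ 0 := pow_ne_zero 2 hlam.ne'
    have h2' : (lam : ℝ) ^ 2 * lam ^ (-μ - 1) = lam * lam ^ (-μ) := by
      rw [← hL, ← Real.rpow_natCast lam 2, ← Real.rpow_add hlam]
      congr 1
      push_cast; ring
    calc A ((τ, σb τ) : ℝ × ℝ) ((τ, σb τ) : ℝ × ℝ)
        = -(lam ^ 2) * (-(lam ^ 2)⁻¹ * A ((τ, σb τ) : ℝ × ℝ) ((τ, σb τ) : ℝ × ℝ)) := by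
          field_simp
    _ = -(lam ^ 2) * ((1 + μ) * (-μ * lam ^ (-μ - 1))) := by rw [h0]
    _ = μ * (1 + μ) * (lam ^ 2 * lam ^ (-μ - 1)) := by ring
    _ = μ * (1 + μ) * (lam * lam ^ (-μ)) := by rw [h2']
  -- second derivative in the τ-direction
  have Auu : A ((1 : ℝ), deriv σb τ) ((1 : ℝ), deriv σb τ)
      = -(lam * (deriv (deriv σb) τ *
          ((σb τ - τ * deriv σb τ)⁻¹ * ((1 + μ) * lam ^ (-μ))))) := by
    have hγ : HasDerivAt (fun s => ((lam⁻¹ * s, lam⁻¹ * σb s) : ℝ × ℝ))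
        (lam⁻¹ * 1, lam⁻¹ * deriv σb τ) τ :=
      ((hasDerivAt_id τ).const_mul lam⁻¹).prodMk ((hσb_diff τ).hasDerivAt.const_mul lam⁻¹)
    have hc2 : HasDerivAt (fun s : ℝ => fderiv ℝ w₀ (lam⁻¹ * s, lam⁻¹ * σb s))
        (A (lam⁻¹ * 1, lam⁻¹ * deriv σb τ)) τ := hA.comp_hasDerivAt τ hγ
    have hu : HasDerivAt (fun s : ℝ => (((1 : ℝ), deriv σb s) : ℝ × ℝ))
        ((0 : ℝ), deriv (deriv σb) τ) τ :=
      (hasDerivAt_const τ (1 : ℝ)).prodMk ((hσb'_diff τ).hasDerivAt)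
    have hφ := hc2.clm_apply hu
    have h0 := hφ.unique ((hasDerivAt_const τ (0 : ℝ)).congr_of_eventuallyEq
      (Filter.Eventually.of_forall fun s => gA lam hlam s))
    have hv1 : ((lam⁻¹ * 1, lam⁻¹ * deriv σb τ) : ℝ × ℝ)
        = lam⁻¹ • (((1 : ℝ), deriv σb τ) : ℝ × ℝ) := by
      simp only [Prod.smul_mk, smul_eq_mul]
    have hv2 : (((0 : ℝ), deriv (deriv σb) τ) : ℝ × ℝ)
        = deriv (deriv σb) τ • (((0 : ℝ), (1 : ℝ)) : ℝ × ℝ) := by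
      simp only [Prod.smul_mk, smul_eq_mul, mul_zero, mul_one]
    rw [hv1, hv2, map_smul, map_smul] at h0
    simp only [ContinuousLinearMap.smul_apply, smul_eq_mul, g01] at h0
    have hlne : (lam : ℝ)⁻¹ ≠ 0 := inv_ne_zero hlam.ne'
    calc A ((1 : ℝ), deriv σb τ) ((1 : ℝ), deriv σb τ)
        = lam * (lam⁻¹ * A ((1 : ℝ), deriv σb τ) ((1 : ℝ), deriv σb τ)) := by field_simp
    _ = lam * (-(deriv (deriv σb) τ *
          ((σb τ - τ * deriv σb τ)⁻¹ * ((1 + μ) * lam ^ (-μ))))) := by rw [show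
          lam⁻¹ * A ((1 : ℝ), deriv σb τ) ((1 : ℝ), deriv σb τ)
          = -(deriv (deriv σb) τ * ((σb τ - τ * deriv σb τ)⁻¹ * ((1 + μ) * lam ^ (-μ))))
          from by linarith]
    _ = _ := by ring
  -- symmetry of the second derivative
  have hop : IsOpen {p : ℝ × ℝ | |p.1| < p.2} :=
    isOpen_lt (continuous_abs.comp continuous_fst) continuous_snd
  have hev : ∀ᶠ y in 𝓝 ((lam⁻¹ * τ, lam⁻¹ * σb τ) : ℝ × ℝ),
      HasFDerivAt w₀ (fderiv ℝ w₀ y) y := by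
    filter_upwards [hop.mem_nhds hp₀] with y hy using (hw₀_diff y hy).hasFDerivAt
  have hsymm : ∀ x y : ℝ × ℝ, A x y = A y x := fun x y =>
    second_derivative_symmetric_of_eventually hev hA x y
  have Auv : A ((1 : ℝ), deriv σb τ) ((τ, σb τ) : ℝ × ℝ) = 0 :=
    (hsymm _ _).trans Avu
  -- rewrite the goal in terms of A
  have hkey : fderiv ℝ (fun p => fderiv ℝ w₀ p (e2 i)) (lam⁻¹ * τ, lam⁻¹ * σb τ)
      = (ContinuousLinearMap.apply ℝ ℝ (e2 i)).comp A :=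
    ((ContinuousLinearMap.apply ℝ ℝ (e2 i)).hasFDerivAt.comp _ hA).fderiv
  rw [hkey]
  simp only [ContinuousLinearMap.coe_comp', Function.comp_apply,
    ContinuousLinearMap.apply_apply]
  -- bilinearity expansion
  have hbil : ∀ a b c d : ℝ,
      A (a • (((1 : ℝ), deriv σb τ) : ℝ × ℝ) - b • ((τ, σb τ) : ℝ × ℝ))
        (c • (((1 : ℝ), deriv σb τ) : ℝ × ℝ) - d • ((τ, σb τ) : ℝ × ℝ))
      = a * c * (A ((1 : ℝ), deriv σb τ) ((1 : ℝ), deriv σb τ))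
        + b * d * (A ((τ, σb τ) : ℝ × ℝ) ((τ, σb τ) : ℝ × ℝ)) := by
    intro a b c d
    rw [map_sub, map_smul, map_smul]
    simp only [ContinuousLinearMap.sub_apply, ContinuousLinearMap.smul_apply, map_sub,
      map_smul, smul_eq_mul, Auv, Avu]
    ring
  -- basis expansions
  have he0 : (((1 : ℝ), (0 : ℝ)) : ℝ × ℝ)
      = (σb τ / (σb τ - τ * deriv σb τ)) • (((1 : ℝ), deriv σb τ) : ℝ × ℝ)
        - (deriv σb τ / (σb τ - τ * deriv σb τ)) • ((τ, σb τ) : ℝ × ℝ) := by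
    simp only [Prod.smul_mk, smul_eq_mul, Prod.mk.injEq, Prod.sub_def]
    constructor <;> field_simp <;> ring
  have he1 : (((0 : ℝ), (1 : ℝ)) : ℝ × ℝ)
      = (-τ / (σb τ - τ * deriv σb τ)) • (((1 : ℝ), deriv σb τ) : ℝ × ℝ)
        - (-1 / (σb τ - τ * deriv σb τ)) • ((τ, σb τ) : ℝ × ℝ) := by
    simp only [Prod.smul_mk, smul_eq_mul, Prod.mk.injEq, Prod.sub_def]
    constructor <;> (field_simp; try ring)
  fin_cases i <;> fin_cases j <;>
    simp only [e2, Fin.isValue, Fin.zero_eta, Fin.mk_one, Matrix.cons_val_zero,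
      Matrix.cons_val_one, Matrix.head_cons]
  · rw [hL, he0, hbil, Auu, Avv]; field_simp; ring
  · rw [hL, he0, he1, hbil, Auu, Avv]; field_simp; ring
  · rw [hL, he0, he1, hbil, Auu, Avv]; field_simp; ring
  · rw [hL, he1, hbil, Auu, Avv]; field_simp; ring
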